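/- For every integer n ≥ 0, ∫_{[0,π]²} (2cosθ₁ + 2cosθ₂)^{2n+1} δ₂(θ₁,θ₂) dθ₁ dθ₂ = 0, and ∫_{[0,π]²} (2cosθ₁ + 2cosθ₂)^{2n} δ₂(θ₁,θ₂) dθ₁ dθ₂ = 6·(2n)!·(2n+2)! / (n!·(n+1)!·(n+2)!·(n+3)!). -/

import Mathlib

open MeasureTheory

/-- The Weyl density `δ₂` of `USp₄` on `[0,π]²`. -/
noncomputable def weylDensity2 (x y : ℝ) : ℝ :=
  (2 / Real.pi ^ 2) * Real.sin x ^ 2 * Real.sin y ^ 2 *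
    (2 * Real.cos y - 2 * Real.cos x) ^ 2

def Wz : ℕ → ℤ → ℕ
  | 0, j => if j = 0 then 1 else 0
  | (m+1), j => Wz m (j+1) + Wz m (j-1)

lemma wz_neg (m : ℕ) : ∀ j : ℤ, Wz m (-j) = Wz m j := by
  induction m with
  | zero => intro j; simp [Wz, neg_eq_zero]
  | succ m ih =>
      intro j
      show Wz m (-j+1) + Wz m (-j-1) = Wz m (j+1) + Wz m (j-1)
      rw [show (-j+1 : ℤ) = -(j-1) by ring, show (-j-1 : ℤ) = -(j+1) by ring, ih, ih]
      ring

lemma wz_nat (m : ℕ) : ∀ i : ℕ, Wz m (i : ℤ) =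
    if (m + i) % 2 = 0 then m.choose ((m + i) / 2) else 0 := by
  induction m with
  | zero =>
      intro i
      rcases Nat.eq_zero_or_pos i with h | h
      · subst h; simp [Wz]
      · rw [show (Wz 0 i = if (i:ℤ) = 0 then 1 else 0) from rfl]
        rcases Nat.even_or_odd i with ⟨h,hh⟩ | ⟨h,hh⟩
        · rw [if_neg (by omega), if_pos (by omega)]
          rw [Nat.choose_eq_zero_of_lt (by omega)]
        · rw [if_neg (by omega), if_neg (by omega)]
  | succ m ih =>
      intro i
      match i with
      | 0 =>
          show Wz m (0+1) + Wz m (0-1) = _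
          rw [show ((0:ℤ)+1) = ((1:ℕ):ℤ) by norm_num,
            show ((0:ℤ)-1) = -((1:ℕ):ℤ) by norm_num, wz_neg, ih 1]
          rcases Nat.even_or_odd m with ⟨h,hh⟩ | ⟨h,hh⟩
          · rw [if_neg (by omega), if_neg (by omega)]
          · rw [if_pos (by omega), if_pos (by omega)]
            have h1 : (m+1)/2 = h+1 := by omega
            have h2 : (m+1+0)/2 = h+1 := by omega
            rw [h1]
            have hp := Nat.choose_succ_succ m h
            have hs : m.choose h = m.choose (h+1) := by
              rw [← Nat.choose_symm (by omega : h+1 ≤ m)]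
              congr 1; omega
            simp only [Nat.succ_eq_add_one] at hp
            omega
      | (i+1) =>
          show Wz m ((i+1:ℕ) + 1) + Wz m ((i+1:ℕ) - 1) = _
          rw [show ((i+1:ℕ) + 1 : ℤ) = ((i+2:ℕ):ℤ) by push_cast; ring,
            show ((i+1:ℕ) - 1 : ℤ) = ((i:ℕ):ℤ) by push_cast; ring, ih, ih]
          rcases Nat.even_or_odd (m + i) with ⟨h,hh⟩ | ⟨h,hh⟩
          · rw [if_pos (by omega), if_pos (by omega), if_pos (by omega)]
            have h1 : (m+(i+2))/2 = h+1 := by omega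
            have h2 : (m+i)/2 = h := by omega
            have h3 : (m+1+(i+1))/2 = h+1 := by omega
            rw [h1, h2, h3]
            have hp := Nat.choose_succ_succ m h
            simp only [Nat.succ_eq_add_one] at hp
            omega
          · rw [if_neg (by omega), if_neg (by omega), if_neg (by omega)]

noncomputable def Bint (m : ℕ) (j k : ℤ) : ℝ :=
  ∫ θ in (Set.Icc (0 : ℝ) Real.pi) ×ˢ (Set.Icc (0 : ℝ) Real.pi),
    (2 * Real.cos θ.1 + 2 * Real.cos θ.2) ^ m * Real.cos (j * θ.1) * Real.cos (k * θ.2)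

lemma integrableOn_sq {F : ℝ × ℝ → ℝ} (hF : Continuous F) :
    IntegrableOn F ((Set.Icc (0 : ℝ) Real.pi) ×ˢ (Set.Icc (0 : ℝ) Real.pi)) :=
  hF.continuousOn.integrableOn_compact (isCompact_Icc.prod isCompact_Icc)

lemma integral_cos_Icc (j : ℤ) :
    ∫ x in Set.Icc (0 : ℝ) Real.pi, Real.cos (j * x) = if j = 0 then Real.pi else 0 := by
  rw [MeasureTheory.integral_Icc_eq_integral_Ioc,
    ← intervalIntegral.integral_of_le Real.pi_pos.le]
  rcases eq_or_ne j 0 with h | h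
  · subst h; simp
  · rw [if_neg h]
    have hc : ((j : ℝ)) ≠ 0 := Int.cast_ne_zero.mpr h
    rw [intervalIntegral.integral_comp_mul_left Real.cos hc, integral_cos]
    simp [Real.sin_int_mul_pi]

lemma bint_zero (j k : ℤ) :
    Bint 0 j k = Real.pi ^ 2 * Wz 0 (j + k) * Wz 0 (j - k) := by
  unfold Bint
  simp only [pow_zero, one_mul]
  have hsplit : (∫ θ in (Set.Icc (0 : ℝ) Real.pi) ×ˢ (Set.Icc (0 : ℝ) Real.pi),
      Real.cos (j * θ.1) * Real.cos (k * θ.2))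
      = (if j = 0 then Real.pi else 0) * (if k = 0 then Real.pi else 0) := by
    rw [MeasureTheory.Measure.volume_eq_prod ℝ ℝ]
    exact (MeasureTheory.setIntegral_prod_mul (fun x => Real.cos ((j : ℝ) * x))
      (fun y => Real.cos ((k : ℝ) * y)) _ _).trans
      (by rw [integral_cos_Icc, integral_cos_Icc])
  rw [hsplit]
  rcases eq_or_ne j 0 with hj | hj <;> rcases eq_or_ne k 0 with hk | hk
  · subst hj; subst hk; simp [Wz]; ring
  · subst hj; rw [if_pos rfl, if_neg hk]
    have : (0 + k) ≠ 0 := by omega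
    simp [Wz, this, hk]
  · subst hk; rw [if_neg hj, if_pos rfl]
    have : (j + 0) ≠ 0 := by omega
    simp [Wz, this, hj]
  · rw [if_neg hj, if_neg hk]
    have : j + k ≠ 0 ∨ j - k ≠ 0 := by omega
    rcases this with h | h <;> simp [Wz, h]

lemma bint_succ (m : ℕ) (j k : ℤ) :
    Bint (m+1) j k = Bint m (j+1) k + Bint m (j-1) k + Bint m j (k+1) + Bint m j (k-1) := by
  unfold Bint
  have key : ∀ θ : ℝ × ℝ,
      (2 * Real.cos θ.1 + 2 * Real.cos θ.2) ^ (m+1) * Real.cos (j * θ.1) * Real.cos (k * θ.2)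
      = (2 * Real.cos θ.1 + 2 * Real.cos θ.2) ^ m * Real.cos ((j+1 : ℤ) * θ.1) * Real.cos (k * θ.2)
      + ((2 * Real.cos θ.1 + 2 * Real.cos θ.2) ^ m * Real.cos ((j-1 : ℤ) * θ.1) * Real.cos (k * θ.2)
      + ((2 * Real.cos θ.1 + 2 * Real.cos θ.2) ^ m * Real.cos (j * θ.1) * Real.cos ((k+1 : ℤ) * θ.2)
      + (2 * Real.cos θ.1 + 2 * Real.cos θ.2) ^ m * Real.cos (j * θ.1) * Real.cos ((k-1 : ℤ) * θ.2))) := by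
    intro θ
    push_cast
    rw [pow_succ,
      show ((j : ℝ) + 1) * θ.1 = j * θ.1 + θ.1 by ring, Real.cos_add,
      show ((j : ℝ) - 1) * θ.1 = j * θ.1 - θ.1 by ring, Real.cos_sub,
      show ((k : ℝ) + 1) * θ.2 = k * θ.2 + θ.2 by ring, Real.cos_add,
      show ((k : ℝ) - 1) * θ.2 = k * θ.2 - θ.2 by ring, Real.cos_sub]
    ring
  simp only [key]
  rw [MeasureTheory.integral_add (integrableOn_sq (by fun_prop)) (integrableOn_sq (by fun_prop)),
    MeasureTheory.integral_add (integrableOn_sq (by fun_prop)) (integrableOn_sq (by fun_prop)),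
    MeasureTheory.integral_add (integrableOn_sq (by fun_prop)) (integrableOn_sq (by fun_prop))]
  ring

lemma bint_eq (m : ℕ) : ∀ j k : ℤ,
    Bint m j k = Real.pi ^ 2 * Wz m (j + k) * Wz m (j - k) := by
  induction m with
  | zero => exact bint_zero
  | succ m ih =>
      intro j k
      rw [bint_succ, ih, ih, ih, ih,
        show j + 1 + k = j + k + 1 by ring, show j + 1 - k = j - k + 1 by ring,
        show j - 1 + k = j + k - 1 by ring, show j - 1 - k = j - k - 1 by ring,
        show j + (k + 1) = j + k + 1 by ring, show j - (k + 1) = j - k - 1 by ring,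
        show j + (k - 1) = j + k - 1 by ring, show j - (k - 1) = j - k + 1 by ring,
        show Wz (m+1) (j+k) = Wz m (j+k+1) + Wz m (j+k-1) from rfl,
        show Wz (m+1) (j-k) = Wz m (j-k+1) + Wz m (j-k-1) from rfl]
      push_cast
      ring

lemma moment_eq (m : ℕ) :
    (∫ θ in (Set.Icc (0 : ℝ) Real.pi) ×ˢ (Set.Icc (0 : ℝ) Real.pi),
        (2 * Real.cos θ.1 + 2 * Real.cos θ.2) ^ m * weylDensity2 θ.1 θ.2)
    = (Wz m 0 : ℝ) ^ 2 - (Wz m 2 : ℝ) ^ 2 - (Wz m 4 : ℝ) ^ 2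
      - (Wz m 0 : ℝ) * Wz m 2 + 2 * (Wz m 2 : ℝ) * Wz m 4
      + (Wz m 2 : ℝ) * Wz m 6 - (Wz m 0 : ℝ) * Wz m 6 := by
  have hπ : Real.pi ≠ 0 := Real.pi_ne_zero
  have key : ∀ θ : ℝ × ℝ,
      (2 * Real.cos θ.1 + 2 * Real.cos θ.2) ^ m * weylDensity2 θ.1 θ.2
      = (1 / Real.pi ^ 2) * ((2 * Real.cos θ.1 + 2 * Real.cos θ.2) ^ m * Real.cos ((0 : ℤ) * θ.1) * Real.cos ((0 : ℤ) * θ.2))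
        + ((-1 / (2 * Real.pi ^ 2)) * ((2 * Real.cos θ.1 + 2 * Real.cos θ.2) ^ m * Real.cos ((0 : ℤ) * θ.1) * Real.cos ((2 : ℤ) * θ.2))
        + ((-1 / (2 * Real.pi ^ 2)) * ((2 * Real.cos θ.1 + 2 * Real.cos θ.2) ^ m * Real.cos ((0 : ℤ) * θ.1) * Real.cos ((4 : ℤ) * θ.2))
        + ((-1 / Real.pi ^ 2) * ((2 * Real.cos θ.1 + 2 * Real.cos θ.2) ^ m * Real.cos ((1 : ℤ) * θ.1) * Real.cos ((1 : ℤ) * θ.2))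
        + ((1 / Real.pi ^ 2) * ((2 * Real.cos θ.1 + 2 * Real.cos θ.2) ^ m * Real.cos ((1 : ℤ) * θ.1) * Real.cos ((3 : ℤ) * θ.2))
        + ((-1 / (2 * Real.pi ^ 2)) * ((2 * Real.cos θ.1 + 2 * Real.cos θ.2) ^ m * Real.cos ((2 : ℤ) * θ.1) * Real.cos ((0 : ℤ) * θ.2))
        + ((1 / (2 * Real.pi ^ 2)) * ((2 * Real.cos θ.1 + 2 * Real.cos θ.2) ^ m * Real.cos ((2 : ℤ) * θ.1) * Real.cos ((4 : ℤ) * θ.2))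
        + ((1 / Real.pi ^ 2) * ((2 * Real.cos θ.1 + 2 * Real.cos θ.2) ^ m * Real.cos ((3 : ℤ) * θ.1) * Real.cos ((1 : ℤ) * θ.2))
        + ((-1 / Real.pi ^ 2) * ((2 * Real.cos θ.1 + 2 * Real.cos θ.2) ^ m * Real.cos ((3 : ℤ) * θ.1) * Real.cos ((3 : ℤ) * θ.2))
        + ((-1 / (2 * Real.pi ^ 2)) * ((2 * Real.cos θ.1 + 2 * Real.cos θ.2) ^ m * Real.cos ((4 : ℤ) * θ.1) * Real.cos ((0 : ℤ) * θ.2))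
        + ((1 / (2 * Real.pi ^ 2)) * ((2 * Real.cos θ.1 + 2 * Real.cos θ.2) ^ m * Real.cos ((4 : ℤ) * θ.1) * Real.cos ((2 : ℤ) * θ.2)))))))))))) := by
    intro θ
    simp only [weylDensity2]
    push_cast
    have c2 : ∀ t : ℝ, Real.cos (2 * t) = 2 * Real.cos t ^ 2 - 1 := fun t => Real.cos_two_mul t
    have c3 : ∀ t : ℝ, Real.cos (3 * t) = 4 * Real.cos t ^ 3 - 3 * Real.cos t :=
      fun t => Real.cos_three_mul t
    have c4 : ∀ t : ℝ, Real.cos (4 * t) = 2 * (2 * Real.cos t ^ 2 - 1) ^ 2 - 1 := fun t => by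
      rw [show (4 : ℝ) * t = 2 * (2 * t) by ring, Real.cos_two_mul, Real.cos_two_mul]
    rw [Real.sin_sq θ.1, Real.sin_sq θ.2, c2 θ.1, c2 θ.2, c3 θ.1, c3 θ.2, c4 θ.1, c4 θ.2,
      zero_mul, Real.cos_zero, one_mul]
    field_simp
    simp only [zero_mul, Real.cos_zero]
    ring
  simp only [key]
  rw [MeasureTheory.integral_add (integrableOn_sq (by fun_prop)) (integrableOn_sq (by fun_prop)),
    MeasureTheory.integral_add (integrableOn_sq (by fun_prop)) (integrableOn_sq (by fun_prop)),
    MeasureTheory.integral_add (integrableOn_sq (by fun_prop)) (integrableOn_sq (by fun_prop)),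
    MeasureTheory.integral_add (integrableOn_sq (by fun_prop)) (integrableOn_sq (by fun_prop)),
    MeasureTheory.integral_add (integrableOn_sq (by fun_prop)) (integrableOn_sq (by fun_prop)),
    MeasureTheory.integral_add (integrableOn_sq (by fun_prop)) (integrableOn_sq (by fun_prop)),
    MeasureTheory.integral_add (integrableOn_sq (by fun_prop)) (integrableOn_sq (by fun_prop)),
    MeasureTheory.integral_add (integrableOn_sq (by fun_prop)) (integrableOn_sq (by fun_prop)),
    MeasureTheory.integral_add (integrableOn_sq (by fun_prop)) (integrableOn_sq (by fun_prop)),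
    MeasureTheory.integral_add (integrableOn_sq (by fun_prop)) (integrableOn_sq (by fun_prop))]
  simp only [MeasureTheory.integral_const_mul]
  have hB : ∀ j k : ℤ, (∫ θ in (Set.Icc (0 : ℝ) Real.pi) ×ˢ (Set.Icc (0 : ℝ) Real.pi),
      (2 * Real.cos θ.1 + 2 * Real.cos θ.2) ^ m * Real.cos (j * θ.1) * Real.cos (k * θ.2))
      = Real.pi ^ 2 * Wz m (j + k) * Wz m (j - k) := fun j k => bint_eq m j k
  rw [hB 0 0, hB 0 2, hB 0 4, hB 1 1, hB 1 3, hB 2 0, hB 2 4, hB 3 1, hB 3 3, hB 4 0, hB 4 2]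
  rw [show (0 + 0 : ℤ) = 0 by norm_num,
    show (0 + 2 : ℤ) = 2 by norm_num,
    show (0 + 4 : ℤ) = 4 by norm_num,
    show (0 - 0 : ℤ) = 0 by norm_num,
    show (0 - 2 : ℤ) = -(2) by norm_num,
    show (0 - 4 : ℤ) = -(4) by norm_num,
    show (1 + 1 : ℤ) = 2 by norm_num,
    show (1 + 3 : ℤ) = 4 by norm_num,
    show (1 - 1 : ℤ) = 0 by norm_num,
    show (1 - 3 : ℤ) = -(2) by norm_num,
    show (2 + 0 : ℤ) = 2 by norm_num,
    show (2 + 4 : ℤ) = 6 by norm_num,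
    show (2 - 0 : ℤ) = 2 by norm_num,
    show (2 - 4 : ℤ) = -(2) by norm_num,
    show (3 + 1 : ℤ) = 4 by norm_num,
    show (3 + 3 : ℤ) = 6 by norm_num,
    show (3 - 1 : ℤ) = 2 by norm_num,
    show (3 - 3 : ℤ) = 0 by norm_num,
    show (4 + 0 : ℤ) = 4 by norm_num,
    show (4 + 2 : ℤ) = 6 by norm_num,
    show (4 - 0 : ℤ) = 4 by norm_num,
    show (4 - 2 : ℤ) = 2 by norm_num]
  simp only [wz_neg]
  field_simp
  ring
lemma choose_rel (n i : ℕ) :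
    ((2*n).choose (n+i+1) : ℝ) * ((n:ℝ)+i+1) = ((2*n).choose (n+i) : ℝ) * ((n:ℝ) - i) := by
  rcases le_or_gt (i+1) n with h | h
  · have h0 := Nat.choose_succ_right_eq (2*n) (n+i)
    rw [show 2*n - (n+i) = n-i by omega] at h0
    have h1 := congrArg (Nat.cast : ℕ → ℝ) h0
    push_cast [Nat.cast_sub (by omega : i ≤ n)] at h1
    linear_combination h1
  · have hz : (2*n).choose (n+i+1) = 0 := Nat.choose_eq_zero_of_lt (by omega)
    rcases eq_or_lt_of_le (by omega : n ≤ i) with rfl | hlt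
    · simp [hz]
    · have hz2 : (2*n).choose (n+i) = 0 := Nat.choose_eq_zero_of_lt (by omega)
      rw [hz, hz2]; norm_num

lemma final_id (n : ℕ) :
    ((2*n).choose n : ℝ)^2 - ((2*n).choose (n+1) : ℝ)^2 - ((2*n).choose (n+2) : ℝ)^2
    - ((2*n).choose n : ℝ) * ((2*n).choose (n+1))
    + 2*((2*n).choose (n+1) : ℝ)*((2*n).choose (n+2))
    + ((2*n).choose (n+1) : ℝ) * ((2*n).choose (n+3))
    - ((2*n).choose n : ℝ) * ((2*n).choose (n+3))
    = 6 * (2*n).factorial * (2*n+2).factorial /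
        (n.factorial * (n+1).factorial * (n+2).factorial * (n+3).factorial) := by
  have r1 := choose_rel n 0
  have r2 := choose_rel n 1
  have r3 := choose_rel n 2
  norm_num at r1 r2 r3
  have hn1 : ((n:ℝ)+1) ≠ 0 := by positivity
  have hn2 : ((n:ℝ)+2) ≠ 0 := by positivity
  have hn3 : ((n:ℝ)+3) ≠ 0 := by positivity
  have hfn : (n.factorial : ℝ) ≠ 0 := by exact_mod_cast n.factorial_ne_zero
  have e1 : ((2*n).choose (n+1) : ℝ) = (2*n).choose n * n / ((n:ℝ)+1) := by
    field_simp; linear_combination r1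
  have e2 : ((2*n).choose (n+2) : ℝ) = (2*n).choose (n+1) * ((n:ℝ)-1) / ((n:ℝ)+2) := by
    field_simp; linear_combination r2
  have e3 : ((2*n).choose (n+3) : ℝ) = (2*n).choose (n+2) * ((n:ℝ)-2) / ((n:ℝ)+3) := by
    field_simp; linear_combination r3
  have hfac : ((2*n).factorial : ℝ) = (2*n).choose n * n.factorial * n.factorial := by
    have h := Nat.choose_mul_factorial_mul_factorial (by omega : n ≤ 2*n)
    rw [show 2*n - n = n by omega] at h
    exact_mod_cast h.symm
  have h2fac : ((2*n+2).factorial : ℝ) = (2*(n:ℝ)+2) * (2*(n:ℝ)+1) * (2*n).factorial := by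
    rw [show 2*n+2 = (2*n+1)+1 by ring, Nat.factorial_succ, Nat.factorial_succ]
    push_cast; ring
  have hf1 : ((n+1).factorial : ℝ) = ((n:ℝ)+1) * n.factorial := by
    rw [Nat.factorial_succ]; push_cast; ring
  have hf2 : ((n+2).factorial : ℝ) = ((n:ℝ)+2) * (((n:ℝ)+1) * n.factorial) := by
    rw [Nat.factorial_succ, Nat.factorial_succ]; push_cast; ring
  have hf3 : ((n+3).factorial : ℝ) = ((n:ℝ)+3) * (((n:ℝ)+2) * (((n:ℝ)+1) * n.factorial)) := by
    rw [Nat.factorial_succ, Nat.factorial_succ, Nat.factorial_succ]; push_cast; ring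
  rw [e3, e2, e1, h2fac, hfac, hf1, hf2, hf3]
  field_simp
  ring


/-- The moments of the trace on `USp₄`: odd moments vanish and the even moments are
`M_{2n} = 6·(2n)!·(2n+2)!/(n!·(n+1)!·(n+2)!·(n+3)!)`. -/
theorem moments_trace_USp4 (n : ℕ) :
    (∫ θ in (Set.Icc (0 : ℝ) Real.pi) ×ˢ (Set.Icc (0 : ℝ) Real.pi),
        (2 * Real.cos θ.1 + 2 * Real.cos θ.2) ^ (2 * n + 1) * weylDensity2 θ.1 θ.2) = 0 ∧
    (∫ θ in (Set.Icc (0 : ℝ) Real.pi) ×ˢ (Set.Icc (0 : ℝ) Real.pi),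
        (2 * Real.cos θ.1 + 2 * Real.cos θ.2) ^ (2 * n) * weylDensity2 θ.1 θ.2)
      = 6 * (2 * n).factorial * (2 * n + 2).factorial /
          (n.factorial * (n + 1).factorial * (n + 2).factorial * (n + 3).factorial) := by
  constructor
  · rw [moment_eq (2*n+1)]
    have o0 : Wz (2*n+1) (0:ℤ) = 0 := by
      have h := wz_nat (2*n+1) 0; rw [if_neg (by omega)] at h; simpa using h
    have o1 : Wz (2*n+1) (2:ℤ) = 0 := by
      have h := wz_nat (2*n+1) 2; rw [if_neg (by omega)] at h; simpa using h
    have o2 : Wz (2*n+1) (4:ℤ) = 0 := by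
      have h := wz_nat (2*n+1) 4; rw [if_neg (by omega)] at h; simpa using h
    have o3 : Wz (2*n+1) (6:ℤ) = 0 := by
      have h := wz_nat (2*n+1) 6; rw [if_neg (by omega)] at h; simpa using h
    rw [o0, o1, o2, o3]
    norm_num
  · rw [moment_eq (2*n)]
    have e0 : Wz (2*n) (0:ℤ) = (2*n).choose n := by
      have h := wz_nat (2*n) 0
      rw [if_pos (by omega), show (2*n+0)/2 = n by omega] at h; simpa using h
    have e1 : Wz (2*n) (2:ℤ) = (2*n).choose (n+1) := by
      have h := wz_nat (2*n) 2
      rw [if_pos (by omega), show (2*n+2)/2 = n+1 by omega] at h; simpa using h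
    have e2 : Wz (2*n) (4:ℤ) = (2*n).choose (n+2) := by
      have h := wz_nat (2*n) 4
      rw [if_pos (by omega), show (2*n+4)/2 = n+2 by omega] at h; simpa using h
    have e3 : Wz (2*n) (6:ℤ) = (2*n).choose (n+3) := by
      have h := wz_nat (2*n) 6
      rw [if_pos (by omega), show (2*n+6)/2 = n+3 by omega] at h; simpa using h
    rw [e0, e1, e2, e3]
    exact final_id n
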